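/- Let p, e, x, y be integers with e ≥ p ≥ 5, 1 ≤ x < e, and 3 ≤ y < e. Define A = 2⌊(y−3)/p⌋ + 2, B = 2⌊(x+e)/p⌋ − 2⌈(x+3−p)/p⌉ + 2, C = ⌊(x+y)/(p−1)⌋ − ⌈(x+3−p)/p⌉, and Δ = min{A, B, C}. Then x − ⌊x/p⌋ − ⌊x/(p−1)⌋ − ⌊(x+y)/(p−1)⌋ + Δ > 0. -/
import Mathlib

set_option maxHeartbeats 1000000 in
theorem stmt6_aux (p e x y f1 f2 f3 f4 f5 c : ℤ)
    (hp : 5 ≤ p) (hpe : p ≤ e) (hx : 1 ≤ x) (hy : 3 ≤ y) (hye : y < e)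
    (h1 : f1 * p ≤ x) (h1' : x < f1 * p + p)
    (h2 : f2 * (p - 1) ≤ x) (h2' : x < f2 * (p - 1) + (p - 1))
    (h3 : f3 * (p - 1) ≤ x + y)
    (h4' : y - 3 < f4 * p + p)
    (h5' : x + e < f5 * p + p)
    (hc' : c * p < x + 3) :
    0 < x - f1 - f2 - f3 + min (min (2 * f4 + 2) (2 * f5 - 2 * c + 2)) (f3 - c) := by
  have hp0 : (0:ℤ) < p := by linarith
  have hf1 : 0 ≤ f1 := by
    by_contra h
    push_neg at h
    nlinarith [mul_nonneg (by linarith : (0:ℤ) ≤ -f1 - 1) (le_of_lt hp0)]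
  have hf2 : 0 ≤ f2 := by
    by_contra h
    push_neg at h
    nlinarith [mul_nonneg (by linarith : (0:ℤ) ≤ -f2 - 1) (by linarith : (0:ℤ) ≤ p - 1)]
  have hf4 : 0 ≤ f4 := by
    by_contra h
    push_neg at h
    nlinarith [mul_nonneg (by linarith : (0:ℤ) ≤ -f4 - 1) (le_of_lt hp0)]
  have hK : f3 ≤ f2 + 2 * f4 + 2 := by
    by_contra h
    push_neg at h
    have hm : (f2 + 2 * f4 + 3) * (p - 1) ≤ f3 * (p - 1) :=
      mul_le_mul_of_nonneg_right (by linarith) (by linarith)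
    nlinarith [mul_nonneg hf4 (by linarith : (0:ℤ) ≤ p - 2)]
  have hA : 0 < x - f1 - f2 - f3 + (2 * f4 + 2) := by
    nlinarith [mul_nonneg hf1 (by linarith : (0:ℤ) ≤ p - 5),
      mul_nonneg hf2 (by linarith : (0:ℤ) ≤ p - 5)]
  have hC : 0 < x - f1 - f2 - c := by
    rcases le_or_gt c 0 with h | h
    · nlinarith [mul_nonneg hf1 (by linarith : (0:ℤ) ≤ p - 5),
        mul_nonneg hf2 (by linarith : (0:ℤ) ≤ p - 5)]
    · nlinarith [mul_nonneg hf1 (by linarith : (0:ℤ) ≤ p - 5),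
        mul_nonneg hf2 (by linarith : (0:ℤ) ≤ p - 5),
        mul_nonneg (by linarith : (0:ℤ) ≤ c - 1) (by linarith : (0:ℤ) ≤ p - 5),
        mul_nonneg (by linarith : (0:ℤ) ≤ c - 1) (le_of_lt hp0)]
  have hB : 0 < x - f1 - f2 - f3 + (2 * f5 - 2 * c + 2) := by
    have H1 : f1 * p * (p - 1) ≤ x * (p - 1) :=
      mul_le_mul_of_nonneg_right h1 (by linarith)
    have H2 : f2 * (p - 1) * p ≤ x * p :=
      mul_le_mul_of_nonneg_right h2 (by linarith)
    have H3 : f3 * (p - 1) * p ≤ (x + e - 1) * p :=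
      mul_le_mul_of_nonneg_right (by linarith) (by linarith)
    have H5 : (x + e + 1 - p) * (p - 1) ≤ f5 * p * (p - 1) :=
      mul_le_mul_of_nonneg_right (by linarith) (by linarith)
    have Hc : c * p * (p - 1) ≤ (x + 2) * (p - 1) :=
      mul_le_mul_of_nonneg_right (by linarith) (by linarith)
    have Hx : 0 ≤ (x - 1) * (p ^ 2 - 4 * p + 1) :=
      mul_nonneg (by linarith) (by nlinarith)
    have He : 0 ≤ (e - p) * (p - 2) :=
      mul_nonneg (by linarith) (by linarith)
    have Hp : 0 < (2 * p - 1) * (p - 3) := by nlinarith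
    have hBmul : 0 < (x - f1 - f2 - f3 + (2 * f5 - 2 * c + 2)) * (p * (p - 1)) := by
      linarith [H1, H2, H3, H5, Hc, Hx, He, Hp]
    by_contra h
    push_neg at h
    nlinarith [mul_nonpos_of_nonpos_of_nonneg h
      (by nlinarith : (0:ℤ) ≤ p * (p - 1))]
  omega

/-- the Claim at the end of Section 5.3. With
`A = 2⌊(y−3)/p⌋+2`, `B = 2⌊(x+e)/p⌋ − 2⌈(x+3−p)/p⌉ + 2`,
`C = ⌊(x+y)/(p−1)⌋ − ⌈(x+3−p)/p⌉` and `Δ = min{A,B,C}`, one has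
`x − ⌊x/p⌋ − ⌊x/(p−1)⌋ − ⌊(x+y)/(p−1)⌋ + Δ > 0`. -/
theorem stmt6 (p e x y : ℤ) (hpe : p ≤ e) (hp : 5 ≤ p)
    (hx1 : 1 ≤ x) (hxe : x < e) (hy3 : 3 ≤ y) (hye : y < e) :
    0 < x - ⌊(x : ℚ) / (p : ℚ)⌋ - ⌊(x : ℚ) / ((p : ℚ) - 1)⌋
        - ⌊((x : ℚ) + (y : ℚ)) / ((p : ℚ) - 1)⌋
        + min (min (2 * ⌊((y : ℚ) - 3) / (p : ℚ)⌋ + 2)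
              (2 * ⌊((x : ℚ) + (e : ℚ)) / (p : ℚ)⌋ - 2 * ⌈((x : ℚ) + 3 - (p : ℚ)) / (p : ℚ)⌉ + 2))
            (⌊((x : ℚ) + (y : ℚ)) / ((p : ℚ) - 1)⌋ - ⌈((x : ℚ) + 3 - (p : ℚ)) / (p : ℚ)⌉) := by
  have hp5 : (5:ℚ) ≤ (p:ℚ) := by exact_mod_cast hp
  have hp0 : (0:ℚ) < (p:ℚ) := by linarith
  have hp1 : (0:ℚ) < (p:ℚ) - 1 := by linarith
  have h1 : ⌊(x : ℚ) / (p : ℚ)⌋ * p ≤ x := by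
    have h := (le_div_iff₀ hp0).mp (Int.floor_le ((x : ℚ) / (p : ℚ)))
    exact_mod_cast h
  have h1' : x < ⌊(x : ℚ) / (p : ℚ)⌋ * p + p := by
    have h := (div_lt_iff₀ hp0).mp (Int.lt_floor_add_one ((x : ℚ) / (p : ℚ)))
    have h2 : (x:ℚ) < (⌊(x : ℚ) / (p : ℚ)⌋ : ℚ) * p + p := by linarith
    exact_mod_cast h2
  have h2 : ⌊(x : ℚ) / ((p : ℚ) - 1)⌋ * (p - 1) ≤ x := by
    have h := (le_div_iff₀ hp1).mp (Int.floor_le ((x : ℚ) / ((p : ℚ) - 1)))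
    have h2 : (⌊(x : ℚ) / ((p : ℚ) - 1)⌋ : ℚ) * ((p:ℚ) - 1) ≤ x := h
    push_cast at h2 ⊢
    exact_mod_cast h2
  have h2' : x < ⌊(x : ℚ) / ((p : ℚ) - 1)⌋ * (p - 1) + (p - 1) := by
    have h := (div_lt_iff₀ hp1).mp (Int.lt_floor_add_one ((x : ℚ) / ((p : ℚ) - 1)))
    have h2 : (x:ℚ) < (⌊(x : ℚ) / ((p : ℚ) - 1)⌋ : ℚ) * ((p:ℚ) - 1) + ((p:ℚ) - 1) := by linarith
    push_cast at h2 ⊢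
    exact_mod_cast h2
  have h3 : ⌊((x : ℚ) + (y : ℚ)) / ((p : ℚ) - 1)⌋ * (p - 1) ≤ x + y := by
    have h := (le_div_iff₀ hp1).mp (Int.floor_le (((x : ℚ) + (y : ℚ)) / ((p : ℚ) - 1)))
    have h2 : (⌊((x : ℚ) + (y : ℚ)) / ((p : ℚ) - 1)⌋ : ℚ) * ((p:ℚ) - 1) ≤ (x:ℚ) + y := h
    push_cast at h2 ⊢
    exact_mod_cast h2
  have h4' : y - 3 < ⌊((y : ℚ) - 3) / (p : ℚ)⌋ * p + p := by
    have h := (div_lt_iff₀ hp0).mp (Int.lt_floor_add_one (((y : ℚ) - 3) / (p : ℚ)))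
    have h2 : (y:ℚ) - 3 < (⌊((y : ℚ) - 3) / (p : ℚ)⌋ : ℚ) * p + p := by linarith
    push_cast at h2 ⊢
    exact_mod_cast h2
  have h5' : x + e < ⌊((x : ℚ) + (e : ℚ)) / (p : ℚ)⌋ * p + p := by
    have h := (div_lt_iff₀ hp0).mp (Int.lt_floor_add_one (((x : ℚ) + (e : ℚ)) / (p : ℚ)))
    have h2 : (x:ℚ) + e < (⌊((x : ℚ) + (e : ℚ)) / (p : ℚ)⌋ : ℚ) * p + p := by linarith
    push_cast at h2 ⊢
    exact_mod_cast h2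
  have hc' : ⌈((x : ℚ) + 3 - (p : ℚ)) / (p : ℚ)⌉ * p < x + 3 := by
    have h := Int.ceil_lt_add_one (((x : ℚ) + 3 - (p : ℚ)) / (p : ℚ))
    have h1 : (⌈((x : ℚ) + 3 - (p : ℚ)) / (p : ℚ)⌉ : ℚ) - 1 < ((x : ℚ) + 3 - (p : ℚ)) / (p : ℚ) := by
      linarith
    have h2 := (lt_div_iff₀ hp0).mp h1
    have h3 : (⌈((x : ℚ) + 3 - (p : ℚ)) / (p : ℚ)⌉ : ℚ) * p < (x:ℚ) + 3 := by nlinarith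
    push_cast at h3 ⊢
    exact_mod_cast h3
  exact stmt6_aux p e x y _ _ _ _ _ _ hp hpe hx1 hy3 hye h1 h1' h2 h2' h3 h4' h5' hc'
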